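/- Let G be a connected graph with a 2-join having split (X1, X2, A1, B1, A2, B2), let (T, r) be a BFS-tree of G with root r ∈ X2, and suppose T contains no edge between A1 and A2. Let a be any vertex of A1 and let P be the path in T from r to a. Then P contains exactly one vertex of B1 and exactly one vertex of B2, and these two vertices are adjacent consecutive vertices of P with the B2-vertex closer to r. -/

import Mathlib

open SimpleGraph Set

/-- `(X1, X2, A1, B1, A2, B2)` is a split of a 2-join of `G`. -/
def IsTwoJoinSplit {V : Type*} (G : SimpleGraph V) (X1 X2 A1 B1 A2 B2 : Set V) : Prop :=
  X1 ∪ X2 = Set.univ ∧ Disjoint X1 X2 ∧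
  A1 ⊆ X1 ∧ B1 ⊆ X1 ∧ A2 ⊆ X2 ∧ B2 ⊆ X2 ∧
  Disjoint A1 B1 ∧ Disjoint A2 B2 ∧
  A1.Nonempty ∧ B1.Nonempty ∧ A2.Nonempty ∧ B2.Nonempty ∧
  (∀ a1 ∈ A1, ∀ a2 ∈ A2, G.Adj a1 a2) ∧
  (∀ b1 ∈ B1, ∀ b2 ∈ B2, G.Adj b1 b2) ∧
  (∀ x ∈ X1, ∀ y ∈ X2, G.Adj x y → (x ∈ A1 ∧ y ∈ A2) ∨ (x ∈ B1 ∧ y ∈ B2)) ∧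
  3 ≤ X1.ncard ∧ 3 ≤ X2.ncard

/-- `(X1, X2)` is a 2-join of `G`. -/
def IsTwoJoin {V : Type*} (G : SimpleGraph V) (X1 X2 : Set V) : Prop :=
  ∃ A1 B1 A2 B2, IsTwoJoinSplit G X1 X2 A1 B1 A2 B2

/-- `(a1, a2, b1, b2)` is a proper 4-tuple of `G`. -/
def ProperQuad {V : Type*} (G : SimpleGraph V) (a1 a2 b1 b2 : V) : Prop :=
  a1 ≠ a2 ∧ a1 ≠ b1 ∧ a1 ≠ b2 ∧ a2 ≠ b1 ∧ a2 ≠ b2 ∧ b1 ≠ b2 ∧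
  G.Adj a1 a2 ∧ G.Adj b1 b2 ∧ ¬ G.Adj a1 b2 ∧ ¬ G.Adj b1 a2

/-- `G[X]` is a chordless path with one end in `A`, the other end in `B`,
and interior in `X \ (A ∪ B)`. -/
def IsPathSide {V : Type*} (G : SimpleGraph V) (X A B : Set V) : Prop :=
  ∃ (k : ℕ) (f : Fin (k+1) → V), Function.Injective f ∧
    X = Set.range f ∧ f 0 ∈ A ∧ f (Fin.last k) ∈ B ∧
    (∀ i : Fin (k+1), i ≠ 0 → i ≠ Fin.last k → f i ∉ A ∪ B) ∧
    (∀ i j : Fin (k+1), G.Adj (f i) (f j) ↔ ((i : ℕ) + 1 = (j : ℕ) ∨ (j : ℕ) + 1 = (i : ℕ)))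

/-- `(X1, X2)` is a path 2-join of `G`: it has a split one of whose sides is a path-side. -/
def IsPathTwoJoin {V : Type*} (G : SimpleGraph V) (X1 X2 : Set V) : Prop :=
  ∃ A1 B1 A2 B2, IsTwoJoinSplit G X1 X2 A1 B1 A2 B2 ∧
    (IsPathSide G X1 A1 B1 ∨ IsPathSide G X2 A2 B2)

/-- A non-path 2-join is a 2-join that is not a path 2-join. -/
def IsNonPathTwoJoin {V : Type*} (G : SimpleGraph V) (X1 X2 : Set V) : Prop :=
  IsTwoJoin G X1 X2 ∧ ¬ IsPathTwoJoin G X1 X2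

/-- `T` is a spanning tree of `G`. -/
def IsSpanningTree {V : Type*} (G T : SimpleGraph V) : Prop := T ≤ G ∧ T.IsTree

/-- `(T, r)` is a BFS-tree of `G`: a spanning tree in which distances from `r`
agree with distances in `G`. -/
def IsBFSTree {V : Type*} (G T : SimpleGraph V) (r : V) : Prop :=
  IsSpanningTree G T ∧ ∀ v, T.dist r v = G.dist r v

private lemma get?_inj_of_nodup {α : Type*} {l : List α} (h : l.Nodup) {i j : ℕ} {x : α}
    (hi : l[i]? = some x) (hj : l[j]? = some x) : i = j := by
  rw [List.getElem?_eq_some_iff] at hi hj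
  obtain ⟨hi', hieq⟩ := hi
  obtain ⟨hj', hjeq⟩ := hj
  have : l[i] = l[j] := by rw [hieq, hjeq]
  exact (List.Nodup.getElem_inj_iff h).mp this

private lemma support_get?_length {V : Type*} {G : SimpleGraph V} {u v : V} (p : G.Walk u v) :
    p.support[p.length]? = some v := by
  induction p with
  | nil => rfl
  | cons h q ih => simpa using ih

private lemma length_takeUntil_eq {V : Type*} [DecidableEq V] {G : SimpleGraph V} {u v x : V}
    (p : G.Walk u v) (hnd : p.support.Nodup) (hx : x ∈ p.support) {i : ℕ}
    (hi : p.support[i]? = some x) : (p.takeUntil x hx).length = i := by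
  have h1 : (p.takeUntil x hx).support[(p.takeUntil x hx).length]? = some x :=
    support_get?_length _
  have h2 : p.support[(p.takeUntil x hx).length]? = some x := by
    have h3 : ((p.takeUntil x hx).append (p.dropUntil x hx)).support[(p.takeUntil x hx).length]? = some x := by
      rw [SimpleGraph.Walk.support_append, List.getElem?_append_left]
      · exact h1
      · rw [SimpleGraph.Walk.length_support]; omega
    rwa [p.take_spec hx] at h3
  exact get?_inj_of_nodup hnd h2 hi

private lemma tree_path_length {V : Type*} {T : SimpleGraph V} (hT : T.IsTree) {u v : V}
    (p : T.Walk u v) (hp : p.IsPath) : p.length = T.dist u v := by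
  obtain ⟨q, hq, hlen⟩ := hT.isConnected.exists_path_of_dist u v
  have : p = q := (hT.existsUnique_path u v).unique hp hq
  rw [this, hlen]

theorem stmt_5 {V : Type*} (G T : SimpleGraph V) (r : V) (hG : G.Connected)
    (hT : IsBFSTree G T r) (X1 X2 A1 B1 A2 B2 : Set V)
    (hsplit : IsTwoJoinSplit G X1 X2 A1 B1 A2 B2) (hr : r ∈ X2)
    (hnoedge : ∀ u v, T.Adj u v → ¬ (u ∈ A1 ∧ v ∈ A2))
    (a : V) (ha : a ∈ A1) (P : T.Walk r a) (hP : P.IsPath) :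
    ∃ b2 b1 : V, b2 ∈ B2 ∧ b1 ∈ B1 ∧ G.Adj b2 b1 ∧
      (∀ x ∈ P.support, x ∈ B1 → x = b1) ∧
      (∀ x ∈ P.support, x ∈ B2 → x = b2) ∧
      ∃ i : ℕ, P.support[i]? = some b2 ∧ P.support[i + 1]? = some b1 := by
  classical
  obtain ⟨⟨hTG, hTree⟩, hdist⟩ := hT
  obtain ⟨hUnion, hDisj, hA1X, hB1X, hA2X, hB2X, hAB1, hAB2, _, _, _, _, hAA, hBB, hCross,
    _, _⟩ := hsplit
  have hX : ∀ x : V, x ∈ X1 ∨ x ∈ X2 := fun x => by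
    have : x ∈ X1 ∪ X2 := by rw [hUnion]; exact Set.mem_univ x
    exact this
  have hnX : ∀ x : V, x ∈ X1 → x ∈ X2 → False := fun x h1 h2 =>
    Set.disjoint_left.mp hDisj h1 h2
  set L := P.support with hLdef
  have hLlen : L.length = P.length + 1 := P.length_support
  -- every vertex at position `i` of `P` is at distance `i` from `r` in `G`
  have hfact : ∀ i x, L[i]? = some x → G.dist r x = i := by
    intro i x hix
    have hx : x ∈ P.support := List.mem_of_getElem? hix
    have h1 : (P.takeUntil x hx).length = i := length_takeUntil_eq P hP.support_nodup hx hix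
    have h2 : (P.takeUntil x hx).length = T.dist r x := tree_path_length hTree _ (hP.takeUntil hx)
    rw [← hdist x, ← h2, h1]
  -- chordlessness
  have hchord : ∀ i k x y, L[i]? = some x → L[k]? = some y → G.Adj x y → k ≤ i + 1 := by
    intro i k x y hi hk hadj
    have h1 := hfact i x hi
    have h2 := hfact k y hk
    have h3 : G.dist r y ≤ G.dist r x + G.dist x y := hG.dist_triangle
    have h4 : G.dist x y = 1 := SimpleGraph.dist_eq_one_iff_adj.mpr hadj
    omega
  -- consecutive vertices are adjacent in T
  have hadjc : ∀ i x y, L[i]? = some x → L[(i+1)]? = some y → T.Adj x y := by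
    intro i x y hx hy
    have hc := P.isChain_adj_support
    rw [List.isChain_iff_getElem] at hc
    rw [← hLdef] at hc
    rw [List.getElem?_eq_some_iff] at hx hy
    obtain ⟨hi, hx⟩ := hx
    obtain ⟨hi', hy⟩ := hy
    have := hc i (by omega)
    rw [hx, hy] at this
    exact this
  -- an X2 → X1 crossing edge of T is a B2-B1 edge
  have hcrossTB : ∀ x y, x ∈ X2 → y ∈ X1 → T.Adj x y → x ∈ B2 ∧ y ∈ B1 := by
    intro x y hx hy hxy
    rcases hCross y hy x hx (hTG hxy).symm with ⟨h1, h2⟩ | ⟨h1, h2⟩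
    · exact absurd ⟨h1, h2⟩ (hnoedge y x hxy.symm)
    · exact ⟨h2, h1⟩
  -- an X1 → X2 crossing edge of T is a B1-B2 edge
  have hcrossTB' : ∀ x y, x ∈ X1 → y ∈ X2 → T.Adj x y → x ∈ B1 ∧ y ∈ B2 := by
    intro x y hx hy hxy
    rcases hCross x hx y hy (hTG hxy) with ⟨h1, h2⟩ | ⟨h1, h2⟩
    · exact absurd ⟨h1, h2⟩ (hnoedge x y hxy)
    · exact ⟨h1, h2⟩
  have hlast : L[P.length]? = some a := support_get?_length P
  have hhead : L[0]? = some r := by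
    rw [hLdef]
    conv_lhs => rw [P.support_eq_cons]
    rfl
  -- first index in X1
  have hex : ∃ i, ∃ x, L[i]? = some x ∧ x ∈ X1 := ⟨P.length, a, hlast, hA1X ha⟩
  obtain ⟨b1, hgj, hb1X1⟩ := Nat.find_spec hex
  set j := Nat.find hex with hjdef
  have hjle : j ≤ P.length := Nat.find_le ⟨a, hlast, hA1X ha⟩
  have hj0 : j ≠ 0 := by
    intro h
    rw [h, hhead] at hgj
    exact hnX b1 hb1X1 (Option.some_injective _ hgj ▸ hr)
  obtain ⟨b2, hgj1⟩ : ∃ y, L[(j-1)]? = some y :=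
    ⟨L[j-1]'(by omega), List.getElem?_eq_getElem _⟩
  have hb2X2 : b2 ∈ X2 := by
    rcases hX b2 with h | h
    · exact absurd ⟨b2, hgj1, h⟩ (Nat.find_min hex (m := j - 1) (by omega))
    · exact h
  have hadj21 : T.Adj b2 b1 := by
    apply hadjc (j-1) b2 b1 hgj1
    rwa [show j - 1 + 1 = j by omega]
  obtain ⟨hb2B2, hb1B1⟩ := hcrossTB b2 b1 hb2X2 hb1X1 hadj21
  -- after index j, the path stays in X1
  have hforward : ∀ k x, j ≤ k → L[k]? = some x → x ∈ X1 := by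
    by_contra hcon
    push_neg at hcon
    obtain ⟨k, x, hk1, hk2, hk3⟩ := hcon
    have hex2 : ∃ k, j ≤ k ∧ ∃ x, L[k]? = some x ∧ x ∈ X2 :=
      ⟨k, hk1, x, hk2, (hX x).resolve_left hk3⟩
    obtain ⟨hk0a, x2, hk0b, hk0c⟩ := Nat.find_spec hex2
    set k0 := Nat.find hex2 with hk0def
    have hk0len : k0 < L.length := (List.getElem?_eq_some_iff.mp hk0b).1
    have hk0j : j < k0 := by
      rcases Nat.lt_or_ge j k0 with h | h
      · exact h
      · exfalso
        have : k0 = j := le_antisymm h hk0a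
        rw [this, hgj] at hk0b
        exact hnX b1 hb1X1 (Option.some_injective _ hk0b ▸ hk0c)
    obtain ⟨x1, hx1g⟩ : ∃ y, L[(k0-1)]? = some y :=
      ⟨L[k0-1]'(by omega), List.getElem?_eq_getElem _⟩
    have hx1X1 : x1 ∈ X1 := by
      rcases hX x1 with h | h
      · exact h
      · exact absurd ⟨by omega, x1, hx1g, h⟩ (Nat.find_min hex2 (m := k0 - 1) (by omega))
    have hadjk : T.Adj x1 x2 := by
      apply hadjc (k0-1) x1 x2 hx1g
      rwa [show k0 - 1 + 1 = k0 by omega]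
    obtain ⟨hx1B1, hx2B2⟩ := hcrossTB' x1 x2 hx1X1 hk0c hadjk
    -- k0 < P.length since a ∈ X1
    have hk0lt : k0 < P.length := by
      rcases Nat.lt_or_ge k0 P.length with h | h
      · exact h
      · exfalso
        have : k0 = P.length := by omega
        rw [this, hlast] at hk0b
        exact hnX a (hA1X ha) (Option.some_injective _ hk0b ▸ hk0c)
    -- next return to X1
    have hex3 : ∃ m, k0 < m ∧ ∃ x, L[m]? = some x ∧ x ∈ X1 :=
      ⟨P.length, hk0lt, a, hlast, hA1X ha⟩
    obtain ⟨hm0a, z, hm0b, hm0c⟩ := Nat.find_spec hex3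
    set m0 := Nat.find hex3 with hm0def
    -- b2 and z are both in B2 × B1 sides, giving a chord
    have hzB1adj : G.Adj b2 z := by
      -- need z ∈ B1: crossing at m0
      obtain ⟨w, hwg⟩ : ∃ y, L[(m0-1)]? = some y :=
        ⟨L[m0-1]'(by
          have : m0 < L.length := (List.getElem?_eq_some_iff.mp hm0b).1
          omega), List.getElem?_eq_getElem _⟩
      have hwX2 : w ∈ X2 := by
        rcases Nat.lt_or_ge k0 (m0 - 1) with h | h
        · rcases hX w with hw | hw
          · exact absurd ⟨h, w, hwg, hw⟩ (Nat.find_min hex3 (m := m0 - 1) (by omega))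
          · exact hw
        · have : m0 - 1 = k0 := by omega
          rw [this, hk0b] at hwg
          exact Option.some_injective _ hwg ▸ hk0c
      have hadjm : T.Adj w z := by
        apply hadjc (m0-1) w z hwg
        rwa [show m0 - 1 + 1 = m0 by omega]
      obtain ⟨hwB2, hzB1⟩ := hcrossTB w z hwX2 hm0c hadjm
      exact (hBB z hzB1 b2 hb2B2).symm
    have := hchord (j-1) m0 b2 z hgj1 hm0b hzB1adj
    omega
  -- uniqueness of the B1 vertex
  have huniq1 : ∀ x ∈ P.support, x ∈ B1 → x = b1 := by
    intro x hxsup hxB1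
    obtain ⟨k, hk⟩ := List.mem_iff_getElem?.mp hxsup
    have hxX1 : x ∈ X1 := hB1X hxB1
    have hkj : j ≤ k := by
      by_contra h
      exact Nat.find_min hex (m := k) (by omega) ⟨x, hk, hxX1⟩
    rcases Nat.eq_or_lt_of_le hkj with h | h
    · have h2 : L[j]? = some x := by rw [h]; exact hk
      exact (Option.some_injective _ (hgj.symm.trans h2)).symm
    · exfalso
      have : G.Adj b2 x := (hBB x hxB1 b2 hb2B2).symm
      have := hchord (j-1) k b2 x hgj1 hk this
      omega
  -- uniqueness of the B2 vertex
  have huniq2 : ∀ x ∈ P.support, x ∈ B2 → x = b2 := by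
    intro x hxsup hxB2
    obtain ⟨k, hk⟩ := List.mem_iff_getElem?.mp hxsup
    have hxX2 : x ∈ X2 := hB2X hxB2
    have hkj : k < j := by
      by_contra h
      exact hnX x (hforward k x (by omega) hk) hxX2
    rcases Nat.eq_or_lt_of_le (by omega : k ≤ j - 1) with h | h
    · have h2 : L[(j - 1)]? = some x := by rw [← h]; exact hk
      exact (Option.some_injective _ (hgj1.symm.trans h2)).symm
    · exfalso
      have hadjxb : G.Adj b1 x := hBB b1 hb1B1 x hxB2
      have := hchord k j x b1 hk hgj hadjxb.symm
      omega
  refine ⟨b2, b1, hb2B2, hb1B1, (hBB b1 hb1B1 b2 hb2B2).symm, huniq1, huniq2, j - 1, hgj1, ?_⟩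
  rwa [show j - 1 + 1 = j by omega]
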